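/- arXiv:1907.05029 — 2 statements merged into one kernel-verified Lean document; each statement's English description precedes it below -/
import Mathlib

section
/- Equivalence of validity for patterns (Theorem relating ML and HModL): For any matching logic pattern φ of sort s over (S,Σ) (equivalently, any φ ∈ Form⁰_s), φ is valid in matching logic (i.e., (M,ρ) ⊨^{ML}_s φ for every matching logic model M and every M-valuation ρ) if and only if φ is valid in the many-sorted hybrid modal logic (i.e., M,g,w ⊨_s φ for every standard model M, every assignment g, and every world w of sort s). Consequently, by the completeness theorems of the two systems, ⊢_{ML} φ if and only if ⊢_s^{HModL} φ. -/
set_option maxHeartbeats 1000000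

attribute [local instance] Classical.propDecidable

namespace HybridML

/-- A many-sorted signature: sorts, operation symbols with arities and result sorts. -/
structure Sig : Type 1 where
  S : Type
  Op : Type
  n : Op → ℕ
  arg : (σ : Op) → Fin (n σ) → S
  res : Op → S

/-- The non-logical vocabulary: S-sorted propositional variables (each nonempty),
nominals, and state variables (each sort inhabited). -/
structure Lang (Sg : Sig) : Type 1 where
  PROP : Sg.S → Type
  NOM : Sg.S → Type
  SVAR : Sg.S → Type
  neP : ∀ s, Nonempty (PROP s)
  neS : ∀ s, Nonempty (SVAR s)

/-- State symbols of sort `t`: nominals or state variables. -/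
abbrev StSym {Sg : Sig} (L : Lang Sg) (t : Sg.S) := L.NOM t ⊕ L.SVAR t

/-- Formulas of the many-sorted hybrid logic `H_Σ(∀)`. -/
inductive Form (Sg : Sig) (L : Lang Sg) : Sg.S → Type where
  | prop {s} : L.PROP s → Form Sg L s
  | nom {s} : L.NOM s → Form Sg L s
  | svar {s} : L.SVAR s → Form Sg L s
  | neg {s} : Form Sg L s → Form Sg L s
  | or {s} : Form Sg L s → Form Sg L s → Form Sg L s
  | app (σ : Sg.Op) : (∀ i, Form Sg L (Sg.arg σ i)) → Form Sg L (Sg.res σ)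
  | all {s t} : L.SVAR t → Form Sg L s → Form Sg L s

variable {Sg : Sig} {L : Lang Sg}

namespace Form

def imp {s} (φ ψ : Form Sg L s) : Form Sg L s := .or (.neg φ) ψ

def and {s} (φ ψ : Form Sg L s) : Form Sg L s := .neg (.or (.neg φ) (.neg ψ))

def iff {s} (φ ψ : Form Sg L s) : Form Sg L s := and (imp φ ψ) (imp ψ φ)

noncomputable def top (s : Sg.S) : Form Sg L s :=
  .or (.prop (Classical.choice (L.neP s))) (.neg (.prop (Classical.choice (L.neP s))))

noncomputable def bot (s : Sg.S) : Form Sg L s := .neg (top s)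

end Form

/-- The dual modal operator `σ□`. -/
def dapp (σ : Sg.Op) (φs : ∀ i, Form Sg L (Sg.arg σ i)) : Form Sg L (Sg.res σ) :=
  .neg (.app σ fun i => .neg (φs i))

/-- The existential binder `∃x φ := ¬∀x¬φ`. -/
def exi {s t} (x : L.SVAR t) (φ : Form Sg L s) : Form Sg L s := .neg (.all x (.neg φ))

/-- Free state variables of a formula (as a set of sorted variables). -/
def free : ∀ {s}, Form Sg L s → Set (Σ u, L.SVAR u)
  | _, .prop _ => ∅
  | _, .nom _ => ∅
  | s, .svar y => {⟨s, y⟩}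
  | _, .neg φ => free φ
  | _, .or φ ψ => free φ ∪ free ψ
  | _, .app _ φs => ⋃ i, free (φs i)
  | _, .all y φ => free φ \ {⟨_, y⟩}

/-- All state variables occurring (free or bound) in a formula. -/
def occ : ∀ {s}, Form Sg L s → Set (Σ u, L.SVAR u)
  | _, .prop _ => ∅
  | _, .nom _ => ∅
  | s, .svar y => {⟨s, y⟩}
  | _, .neg φ => occ φ
  | _, .or φ ψ => occ φ ∪ occ ψ
  | _, .app _ φs => ⋃ i, occ (φs i)
  | _, .all y φ => insert ⟨_, y⟩ (occ φ)

/-- Substitution `φ[ζ/x]` of the formula `ζ` (a state symbol, viewed as a formula) for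
all free occurrences of the state variable `x`. -/
noncomputable def subst {t : Sg.S} (x : L.SVAR t) (ζ : Form Sg L t) :
    ∀ {s}, Form Sg L s → Form Sg L s
  | _, .prop p => .prop p
  | _, .nom j => .nom j
  | s, .svar y =>
      if h : (⟨s, y⟩ : Σ u, L.SVAR u) = ⟨t, x⟩ then
        cast (congrArg (Form Sg L) (congrArg Sigma.fst h)).symm ζ
      else .svar y
  | _, .neg φ => .neg (subst x ζ φ)
  | _, .or φ ψ => .or (subst x ζ φ) (subst x ζ ψ)
  | _, .app σ φs => .app σ (fun i => subst x ζ (φs i))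
  | s, .all y φ =>
      if (⟨_, y⟩ : Σ u, L.SVAR u) = ⟨t, x⟩ then .all y φ else .all y (subst x ζ φ)

/-- `SubstitutableV x y φ`: the state variable `y` is substitutable for `x` in `φ`:
no free occurrence of `x` in `φ` lies in the scope of a binder `∀y`. -/
def SubstitutableV {t u : Sg.S} (x : L.SVAR t) (y : L.SVAR u) : ∀ {s}, Form Sg L s → Prop
  | _, .prop _ => True
  | _, .nom _ => True
  | _, .svar _ => True
  | _, .neg φ => SubstitutableV x y φ
  | _, .or φ ψ => SubstitutableV x y φ ∧ SubstitutableV x y ψ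
  | _, .app _ φs => ∀ i, SubstitutableV x y (φs i)
  | _, .all z φ =>
      (⟨t, x⟩ : Σ v, L.SVAR v) ∉ free (Form.all z φ) ∨
      ((⟨_, z⟩ : Σ v, L.SVAR v) ≠ ⟨u, y⟩ ∧ SubstitutableV x y φ)

/-- An `(S,Σ)`-model: a frame together with a valuation. -/
structure Model (Sg : Sig) (L : Lang Sg) : Type 1 where
  W : Sg.S → Type
  ne : ∀ s, Nonempty (W s)
  R : ∀ σ : Sg.Op, W (Sg.res σ) → (∀ i, W (Sg.arg σ i)) → Prop
  Vp : ∀ s, L.PROP s → Set (W s)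
  Vn : ∀ s, L.NOM s → Set (W s)

/-- A model is standard if every nominal is evaluated to a singleton. -/
def Model.Standard (M : Model Sg L) : Prop := ∀ s (j : L.NOM s), ∃ w, M.Vn s j = {w}

/-- An assignment of the state variables. -/
def Assign (M : Model Sg L) := ∀ s, L.SVAR s → M.W s

/-- `Variant g g' x`: the assignments `g` and `g'` agree except possibly at `x`. -/
def Variant {M : Model Sg L} (g g' : Assign M) {t} (x : L.SVAR t) : Prop :=
  ∀ (u) (y : L.SVAR u), (⟨u, y⟩ : Σ v, L.SVAR v) ≠ ⟨t, x⟩ → g u y = g' u y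

/-- The satisfaction relation `M,g,w ⊨_s φ` of `H_Σ(∀)`. -/
def Sat (M : Model Sg L) : ∀ {s}, Assign M → Form Sg L s → M.W s → Prop
  | s, _, .prop p, w => w ∈ M.Vp s p
  | s, _, .nom j, w => w ∈ M.Vn s j
  | s, g, .svar x, w => w = g s x
  | _, g, .neg φ, w => ¬ Sat M g φ w
  | _, g, .or φ ψ, w => Sat M g φ w ∨ Sat M g ψ w
  | _, g, .app σ φs, w => ∃ ws, M.R σ w ws ∧ ∀ i, Sat M g (φs i) (ws i)
  | _, g, .all x φ, w => ∀ g', Variant g g' x → Sat M g' φ w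

/-- Propositional skeletons, used to express "all instances of propositional tautologies". -/
inductive PForm where
  | atom : ℕ → PForm
  | neg : PForm → PForm
  | or : PForm → PForm → PForm

def PForm.eval (v : ℕ → Bool) : PForm → Bool
  | .atom n => v n
  | .neg p => !(p.eval v)
  | .or p q => p.eval v || q.eval v

/-- A propositional tautology. -/
def PForm.Taut (p : PForm) : Prop := ∀ v, p.eval v = true

/-- Instantiation of a propositional skeleton by formulas of sort `s`. -/
def PForm.inst {s} (f : ℕ → Form Sg L s) : PForm → Form Sg L s
  | .atom n => f n
  | .neg p => .neg (p.inst f)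
  | .or p q => .or (p.inst f) (q.inst f)

/-- Hole-free "nominal context" parts: built from `⊤` and the operation symbols. -/
inductive Ctx0 (Sg : Sig) : Sg.S → Type where
  | top {s} : Ctx0 Sg s
  | app (σ : Sg.Op) : (∀ i, Ctx0 Sg (Sg.arg σ i)) → Ctx0 Sg (Sg.res σ)

/-- Nominal contexts with exactly one hole of sort `h`. -/
inductive Ctx1 (Sg : Sig) (h : Sg.S) : Sg.S → Type where
  | hole : Ctx1 Sg h h
  | app (σ : Sg.Op) (i : Fin (Sg.n σ)) :
      Ctx1 Sg h (Sg.arg σ i) → (∀ j, Ctx0 Sg (Sg.arg σ j)) → Ctx1 Sg h (Sg.res σ)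

noncomputable def Ctx0.toForm : ∀ {s}, Ctx0 Sg s → Form Sg L s
  | s, .top => Form.top s
  | _, .app σ cs => .app σ (fun i => (cs i).toForm)

/-- Plugging a formula into the (unique) hole of a nominal context. -/
noncomputable def Ctx1.plug {h} (φ : Form Sg L h) : ∀ {s}, Ctx1 Sg h s → Form Sg L s
  | _, .hole => φ
  | _, .app σ i c args =>
      .app σ (Function.update (fun j => Ctx0.toForm (args j)) i (c.plug φ))

/-- The dual `η□` of a nominal context, as an operation on formulas. -/
noncomputable def plugD {h s} (θ : Ctx1 Sg h s) (φ : Form Sg L h) : Form Sg L s :=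
  .neg (θ.plug (.neg φ))

/-- The deductive system of `H_Σ(∀)`. -/
inductive Prf : ∀ {s : Sg.S}, Form Sg L s → Prop where
  | taut {s} (p : PForm) (f : ℕ → Form Sg L s) : p.Taut → Prf (p.inst f)
  | kax (σ : Sg.Op) (i : Fin (Sg.n σ)) (φs : ∀ j, Form Sg L (Sg.arg σ j))
      (φ χ : Form Sg L (Sg.arg σ i)) :
      Prf (Form.imp (dapp σ (Function.update φs i (Form.imp φ χ)))
        (Form.imp (dapp σ (Function.update φs i φ)) (dapp σ (Function.update φs i χ))))
  | dualax (σ : Sg.Op) (φs : ∀ j, Form Sg L (Sg.arg σ j)) :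
      Prf (Form.iff (.app σ φs) (.neg (dapp σ fun j => .neg (φs j))))
  | q1 {s t} (x : L.SVAR t) (φ ψ : Form Sg L s)
      (hx : (⟨t, x⟩ : Σ v, L.SVAR v) ∉ free φ) :
      Prf (Form.imp (.all x (Form.imp φ ψ)) (Form.imp φ (.all x ψ)))
  | q2v {s t} (x y : L.SVAR t) (φ : Form Sg L s) (h : SubstitutableV x y φ) :
      Prf (Form.imp (.all x φ) (subst x (.svar y) φ))
  | q2n {s t} (x : L.SVAR t) (j : L.NOM t) (φ : Form Sg L s) :
      Prf (Form.imp (.all x φ) (subst x (.nom j) φ))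
  | nameax {s} (x : L.SVAR s) : Prf (exi x (Form.svar x))
  | barcan (σ : Sg.Op) (i : Fin (Sg.n σ)) {t} (x : L.SVAR t)
      (φs : ∀ j, Form Sg L (Sg.arg σ j)) :
      Prf (Form.imp (.all x (dapp σ φs)) (dapp σ (Function.update φs i (.all x (φs i)))))
  | nomax {s s'} (η θ : Ctx1 Sg s' s) (x : L.SVAR s') (φ : Form Sg L s') :
      Prf (.all x (Form.imp (η.plug (Form.and (.svar x) φ)) (plugD θ (Form.imp (.svar x) φ))))
  | mp {s} {φ ψ : Form Sg L s} : Prf (Form.imp φ ψ) → Prf φ → Prf ψ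
  | ug (σ : Sg.Op) (i : Fin (Sg.n σ)) (φs : ∀ j, Form Sg L (Sg.arg σ j))
      {φ : Form Sg L (Sg.arg σ i)} : Prf φ → Prf (dapp σ (Function.update φs i φ))
  | gen {s t} (x : L.SVAR t) {φ : Form Sg L s} : Prf φ → Prf (.all x φ)

/-- Conjunction of a finite list of formulas. -/
noncomputable def conj {s} : List (Form Sg L s) → Form Sg L s
  | [] => Form.top s
  | φ :: l => Form.and φ (conj l)

/-- A set of sort-`s` formulas is consistent if `⊥_s` is not derivable from it. -/
def Consistent {s} (Γ : Set (Form Sg L s)) : Prop :=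
  ¬ ∃ l : List (Form Sg L s), (∀ φ ∈ l, φ ∈ Γ) ∧ Prf (Form.imp (conj l) (Form.bot s))

/-- Maximal consistent sets. -/
def MaxConsistent {s} (Γ : Set (Form Sg L s)) : Prop :=
  Consistent Γ ∧ ∀ Δ, Consistent Δ → Γ ⊆ Δ → Δ = Γ

/-- A maximal consistent set of sort `s` is witnessed if every existential formula
has a nominal witness conditional in the set. -/
def Witnessed {s} (Γ : Set (Form Sg L s)) : Prop :=
  ∀ {t} (x : L.SVAR t) (φ : Form Sg L s),
    ∃ j : L.NOM t, Form.imp (exi x φ) (subst x (.nom j) φ) ∈ Γ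

/-- The canonical relation between (maximal consistent) sets of formulas:
`R_σ w u₁…u_n` iff `σ(ψ₁,…,ψ_n) ∈ w` whenever `ψ_i ∈ u_i` for all `i`. -/
def CanR (σ : Sg.Op) (w : Set (Form Sg L (Sg.res σ)))
    (us : ∀ i, Set (Form Sg L (Sg.arg σ i))) : Prop :=
  ∀ ψs : ∀ i, Form Sg L (Sg.arg σ i), (∀ i, ψs i ∈ us i) → Form.app σ ψs ∈ w

/-- Reachability from `Υ` in the witnessed canonical model (the generated submodel). -/
inductive Reach {s} (Υ : Set (Form Sg L s)) : ∀ t, Set (Form Sg L t) → Prop where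
  | base : Reach Υ s Υ
  | step {σ : Sg.Op} {w : Set (Form Sg L (Sg.res σ))} {us : ∀ i, Set (Form Sg L (Sg.arg σ i))}
      (i : Fin (Sg.n σ)) : Reach Υ (Sg.res σ) w →
      (∀ j, MaxConsistent (us j) ∧ Witnessed (us j)) → CanR σ w us →
      Reach Υ (Sg.arg σ i) (us i)
/-- Witnessed maximal consistent sets. -/
def WMCS {s} (Γ : Set (Form Sg L s)) : Prop := MaxConsistent Γ ∧ Witnessed Γ

section Completed

variable {s : Sg.S} (Υ : Set (Form Sg L s))

/-- Worlds of the witnessed submodel generated by `Υ`: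
witnessed maximal consistent sets reachable from `Υ`. -/
def RW (t : Sg.S) : Type := {Γ : Set (Form Sg L t) // WMCS Γ ∧ Reach Υ t Γ}

/-- The sort `t` needs a dummy state `⋆_t` iff some state variable of sort `t`
occurs in no world of sort `t`. -/
def needsStar (t : Sg.S) : Prop := ∃ x : L.SVAR t, ∀ Γ : RW Υ t, Form.svar x ∉ Γ.val

/-- Worlds of the completed model: the generated witnessed worlds, plus the dummy
state `⋆_t` (represented by `none`), which is present only when needed. -/
def CW (t : Sg.S) : Type := {o : Option (RW Υ t) // o = none → needsStar Υ t}

variable (hΥ : WMCS Υ)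

/-- `Υ` as a world of the generated submodel. -/
def baseW : RW Υ s := ⟨Υ, hΥ, Reach.base⟩

/-- The completed witnessed model generated by `Υ`. -/
noncomputable def completedModel : Model Sg L where
  W := CW Υ
  ne := fun t => by
    by_cases h : Nonempty (RW Υ t)
    · exact ⟨⟨some h.some, fun hc => (Option.some_ne_none _ hc).elim⟩⟩
    · exact ⟨⟨none, fun _ => ⟨Classical.choice (L.neS t), fun Γ _ => h ⟨Γ⟩⟩⟩⟩
  R := fun σ w ws =>
    (∃ (Γ : RW Υ (Sg.res σ)) (us : ∀ i, RW Υ (Sg.arg σ i)),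
        w.val = some Γ ∧ (∀ i, (ws i).val = some (us i)) ∧
        CanR σ Γ.val (fun i => (us i).val))
    ∨ (w.val = none ∧ ∀ i, ∃ h : Sg.arg σ i = s,
        (ws i).val = some (cast (congrArg (RW Υ) h).symm (baseW Υ hΥ)))
  Vp := fun t p => {w | ∃ Γ : RW Υ t, w.val = some Γ ∧ Form.prop p ∈ Γ.val}
  Vn := fun t j =>
    if ∃ Γ : RW Υ t, Form.nom j ∈ Γ.val then
      {w | ∃ Γ : RW Υ t, w.val = some Γ ∧ Form.nom j ∈ Γ.val}
    else {w | w.val = none}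

/-- The completed assignment: each state variable denotes the world containing it,
if any, and the dummy state otherwise. -/
noncomputable def completedAssign : Assign (completedModel Υ hΥ) := fun t x =>
  if h : ∃ Γ : RW Υ t, Form.svar x ∈ Γ.val then
    ⟨some h.choose, fun hc => (Option.some_ne_none _ hc).elim⟩
  else ⟨none, fun _ => ⟨x, fun Γ hx => h ⟨Γ, hx⟩⟩⟩

end Completed

section Extension

/-- Extending the language with a countably infinite set of new nominals at each sort. -/
def Lang.addNom (L : Lang Sg) : Lang Sg :=
  { L with NOM := fun s => L.NOM s ⊕ ℕ }

/-- The inclusion of formulas of the original language into the extended language. -/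
def Form.mapNom : ∀ {s}, Form Sg L s → Form Sg L.addNom s
  | _, .prop p => .prop p
  | _, .nom j => .nom (Sum.inl j)
  | _, .svar x => .svar x
  | _, .neg φ => .neg φ.mapNom
  | _, .or φ ψ => .or φ.mapNom ψ.mapNom
  | _, .app σ φs => .app σ (fun i => (φs i).mapNom)
  | _, .all x φ => .all x φ.mapNom

end Extension
/-! ### The many-sorted hybrid modal logic `H_Σ(@_z,∀)` -/

/-- Formulas of the many-sorted hybrid logic `H_Σ(@_z,∀)`, with satisfaction
operators `@_z^s` indexed by state symbols. -/
inductive AForm (Sg : Sig) (L : Lang Sg) : Sg.S → Type where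
  | prop {s} : L.PROP s → AForm Sg L s
  | nom {s} : L.NOM s → AForm Sg L s
  | svar {s} : L.SVAR s → AForm Sg L s
  | neg {s} : AForm Sg L s → AForm Sg L s
  | or {s} : AForm Sg L s → AForm Sg L s → AForm Sg L s
  | app (σ : Sg.Op) : (∀ i, AForm Sg L (Sg.arg σ i)) → AForm Sg L (Sg.res σ)
  | all {s t} : L.SVAR t → AForm Sg L s → AForm Sg L s
  | at_ {s t} : StSym L t → AForm Sg L t → AForm Sg L s

namespace AForm

def imp {s} (φ ψ : AForm Sg L s) : AForm Sg L s := .or (.neg φ) ψ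

def and {s} (φ ψ : AForm Sg L s) : AForm Sg L s := .neg (.or (.neg φ) (.neg ψ))

def iff {s} (φ ψ : AForm Sg L s) : AForm Sg L s := and (imp φ ψ) (imp ψ φ)

noncomputable def top (s : Sg.S) : AForm Sg L s :=
  .or (.prop (Classical.choice (L.neP s))) (.neg (.prop (Classical.choice (L.neP s))))

noncomputable def bot (s : Sg.S) : AForm Sg L s := .neg (top s)

end AForm

/-- A state symbol viewed as a formula. -/
def symForm {t} : StSym L t → AForm Sg L t
  | .inl j => .nom j
  | .inr x => .svar x

/-- The dual modal operator `σ□` for `H_Σ(@_z,∀)`. -/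
def dappA (σ : Sg.Op) (φs : ∀ i, AForm Sg L (Sg.arg σ i)) : AForm Sg L (Sg.res σ) :=
  .neg (.app σ fun i => .neg (φs i))

/-- The existential binder for `H_Σ(@_z,∀)`. -/
def exiA {s t} (x : L.SVAR t) (φ : AForm Sg L s) : AForm Sg L s := .neg (.all x (.neg φ))

/-- Free state variables of an `H_Σ(@_z,∀)`-formula. -/
def freeA : ∀ {s}, AForm Sg L s → Set (Σ u, L.SVAR u)
  | _, .prop _ => ∅
  | _, .nom _ => ∅
  | s, .svar y => {⟨s, y⟩}
  | _, .neg φ => freeA φ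
  | _, .or φ ψ => freeA φ ∪ freeA ψ
  | _, .app _ φs => ⋃ i, freeA (φs i)
  | _, .all y φ => freeA φ \ {⟨_, y⟩}
  | _, .at_ z φ =>
      (match z with
        | .inl _ => ∅
        | .inr x => {⟨_, x⟩}) ∪ freeA φ

/-- All state variables occurring in an `H_Σ(@_z,∀)`-formula (free, bound, or as
subscripts of satisfaction operators). -/
def occA : ∀ {s}, AForm Sg L s → Set (Σ u, L.SVAR u)
  | _, .prop _ => ∅
  | _, .nom _ => ∅
  | s, .svar y => {⟨s, y⟩}
  | _, .neg φ => occA φ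
  | _, .or φ ψ => occA φ ∪ occA ψ
  | _, .app _ φs => ⋃ i, occA (φs i)
  | _, .all y φ => insert ⟨_, y⟩ (occA φ)
  | _, .at_ z φ =>
      (match z with
        | .inl _ => ∅
        | .inr x => {⟨_, x⟩}) ∪ occA φ

/-- Substitution of the formula `ζ` for free occurrences of the state variable `x`. -/
noncomputable def substA {t : Sg.S} (x : L.SVAR t) (ζ : AForm Sg L t) :
    ∀ {s}, AForm Sg L s → AForm Sg L s
  | _, .prop p => .prop p
  | _, .nom j => .nom j
  | s, .svar y =>
      if h : (⟨s, y⟩ : Σ u, L.SVAR u) = ⟨t, x⟩ then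
        cast (congrArg (AForm Sg L) (congrArg Sigma.fst h)).symm ζ
      else .svar y
  | _, .neg φ => .neg (substA x ζ φ)
  | _, .or φ ψ => .or (substA x ζ φ) (substA x ζ ψ)
  | _, .app σ φs => .app σ (fun i => substA x ζ (φs i))
  | s, .all y φ =>
      if (⟨_, y⟩ : Σ u, L.SVAR u) = ⟨t, x⟩ then .all y φ else .all y (substA x ζ φ)
  | _, .at_ z φ => .at_ z (substA x ζ φ)

/-- Substitutability of the state variable `y` for `x` in an `H_Σ(@_z,∀)`-formula. -/
def SubstitutableA {t u : Sg.S} (x : L.SVAR t) (y : L.SVAR u) : ∀ {s}, AForm Sg L s → Prop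
  | _, .prop _ => True
  | _, .nom _ => True
  | _, .svar _ => True
  | _, .neg φ => SubstitutableA x y φ
  | _, .or φ ψ => SubstitutableA x y φ ∧ SubstitutableA x y ψ
  | _, .app _ φs => ∀ i, SubstitutableA x y (φs i)
  | _, .all z φ =>
      (⟨t, x⟩ : Σ v, L.SVAR v) ∉ freeA (AForm.all z φ) ∨
      ((⟨_, z⟩ : Σ v, L.SVAR v) ≠ ⟨u, y⟩ ∧ SubstitutableA x y φ)
  | _, .at_ _ φ => SubstitutableA x y φ

/-- The denotation `Den_g(z)` of a state symbol: the unique element of `V(z)` for a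
nominal (in a standard model), and `g(z)` for a state variable. -/
noncomputable def den (M : Model Sg L) (g : Assign M) {t} : StSym L t → M.W t
  | .inl j => if h : ∃ v, M.Vn t j = {v} then h.choose else Classical.choice (M.ne t)
  | .inr x => g t x

/-- The satisfaction relation of `H_Σ(@_z,∀)`. -/
def SatA (M : Model Sg L) : ∀ {s}, Assign M → AForm Sg L s → M.W s → Prop
  | s, _, .prop p, w => w ∈ M.Vp s p
  | s, _, .nom j, w => w ∈ M.Vn s j
  | s, g, .svar x, w => w = g s x
  | _, g, .neg φ, w => ¬ SatA M g φ w
  | _, g, .or φ ψ, w => SatA M g φ w ∨ SatA M g ψ w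
  | _, g, .app σ φs, w => ∃ ws, M.R σ w ws ∧ ∀ i, SatA M g (φs i) (ws i)
  | _, g, .all x φ, w => ∀ g', Variant g g' x → SatA M g' φ w
  | _, g, .at_ z φ, _ => SatA M g φ (den M g z)

/-- A model with assignment is named if every world is the denotation of a state symbol. -/
def NamedM (M : Model Sg L) (g : Assign M) : Prop :=
  ∀ (t) (w : M.W t), ∃ z : StSym L t, den M g z = w

/-- Instantiation of a propositional skeleton by `H_Σ(@_z,∀)`-formulas. -/
def PForm.instA {s} (f : ℕ → AForm Sg L s) : PForm → AForm Sg L s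
  | .atom n => f n
  | .neg p => .neg (p.instA f)
  | .or p q => .or (p.instA f) (q.instA f)

/-- The deductive system of `H_Σ(@_z,∀)`, extended with a set `Λ` of additional axioms. -/
inductive PrfAt (Λ : ∀ t, Set (AForm Sg L t)) : ∀ {s : Sg.S}, AForm Sg L s → Prop where
  | hyp {s} {φ : AForm Sg L s} : φ ∈ Λ s → PrfAt Λ φ
  | taut {s} (p : PForm) (f : ℕ → AForm Sg L s) : p.Taut → PrfAt Λ (p.instA f)
  | kax (σ : Sg.Op) (i : Fin (Sg.n σ)) (φs : ∀ j, AForm Sg L (Sg.arg σ j))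
      (φ χ : AForm Sg L (Sg.arg σ i)) :
      PrfAt Λ (AForm.imp (dappA σ (Function.update φs i (AForm.imp φ χ)))
        (AForm.imp (dappA σ (Function.update φs i φ)) (dappA σ (Function.update φs i χ))))
  | dualax (σ : Sg.Op) (φs : ∀ j, AForm Sg L (Sg.arg σ j)) :
      PrfAt Λ (AForm.iff (.app σ φs) (.neg (dappA σ fun j => .neg (φs j))))
  | kat {s t} (z : StSym L t) (φ ψ : AForm Sg L t) :
      PrfAt Λ (AForm.imp (.at_ (s := s) z (AForm.imp φ ψ))
        (AForm.imp (.at_ (s := s) z φ) (.at_ (s := s) z ψ)))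
  | agree {t t' u} (y : StSym L t') (z : StSym L u) (φ : AForm Sg L u) :
      PrfAt Λ (AForm.iff (.at_ (s := t) y (.at_ (s := t') z φ)) (.at_ (s := t) z φ))
  | selfdual {s t} (z : StSym L t) (φ : AForm Sg L t) :
      PrfAt Λ (AForm.iff (.at_ (s := s) z φ) (.neg (.at_ (s := s) z (.neg φ))))
  | intro {s} (z : StSym L s) (φ : AForm Sg L s) :
      PrfAt Λ (AForm.imp (symForm z) (AForm.iff φ (.at_ (s := s) z φ)))
  | back (σ : Sg.Op) (i : Fin (Sg.n σ)) (φs : ∀ j, AForm Sg L (Sg.arg σ j))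
      {t} (z : StSym L t) (ψ : AForm Sg L t) :
      PrfAt Λ (AForm.imp (.app σ (Function.update φs i (.at_ (s := Sg.arg σ i) z ψ)))
        (.at_ (s := Sg.res σ) z ψ))
  | ref {s t} (z : StSym L t) : PrfAt Λ (.at_ (s := s) z (symForm z))
  | q1 {s t} (x : L.SVAR t) (φ ψ : AForm Sg L s)
      (hx : (⟨t, x⟩ : Σ v, L.SVAR v) ∉ freeA φ) :
      PrfAt Λ (AForm.imp (.all x (AForm.imp φ ψ)) (AForm.imp φ (.all x ψ)))
  | q2v {s t} (x y : L.SVAR t) (φ : AForm Sg L s) (h : SubstitutableA x y φ) :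
      PrfAt Λ (AForm.imp (.all x φ) (substA x (.svar y) φ))
  | q2n {s t} (x : L.SVAR t) (j : L.NOM t) (φ : AForm Sg L s) :
      PrfAt Λ (AForm.imp (.all x φ) (substA x (.nom j) φ))
  | nameax {s} (x : L.SVAR s) : PrfAt Λ (exiA x (AForm.svar x))
  | barcan (σ : Sg.Op) (i : Fin (Sg.n σ)) {t} (x : L.SVAR t)
      (φs : ∀ j, AForm Sg L (Sg.arg σ j)) :
      PrfAt Λ (AForm.imp (.all x (dappA σ φs)) (dappA σ (Function.update φs i (.all x (φs i)))))
  | barcanAt {s t u} (x : L.SVAR t) (z : StSym L u) (φ : AForm Sg L u)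
      (h : (⟨u, z⟩ : Σ v, StSym L v) ≠ ⟨t, Sum.inr x⟩) :
      PrfAt Λ (AForm.imp (.all x (.at_ (s := s) z φ)) (.at_ (s := s) z (.all x φ)))
  | nomx {s u} (z y : StSym L u) (x : L.SVAR u) :
      PrfAt Λ (AForm.imp (AForm.and (.at_ (s := s) z (.svar x)) (.at_ (s := s) y (.svar x)))
        (.at_ (s := s) z (symForm y)))
  | mp {s} {φ ψ : AForm Sg L s} : PrfAt Λ (AForm.imp φ ψ) → PrfAt Λ φ → PrfAt Λ ψ
  | ug (σ : Sg.Op) (i : Fin (Sg.n σ)) (φs : ∀ j, AForm Sg L (Sg.arg σ j))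
      {φ : AForm Sg L (Sg.arg σ i)} : PrfAt Λ φ → PrfAt Λ (dappA σ (Function.update φs i φ))
  | gen {s t} (x : L.SVAR t) {φ : AForm Sg L s} : PrfAt Λ φ → PrfAt Λ (.all x φ)
  | broadcast {s s' t} (z : StSym L t) (φ : AForm Sg L t) :
      PrfAt Λ (.at_ (s := s) z φ) → PrfAt Λ (.at_ (s := s') z φ)
  | genAt {s t} (z : StSym L t) {φ : AForm Sg L t} :
      PrfAt Λ φ → PrfAt Λ (.at_ (s := s) z φ)
  | paste0 {s u} (z : StSym L u) (y : L.SVAR u) (φ : AForm Sg L u) (ψ : AForm Sg L s)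
      (hzy : z ≠ .inr y) (hyφ : (⟨u, y⟩ : Σ v, L.SVAR v) ∉ occA φ)
      (hyψ : (⟨u, y⟩ : Σ v, L.SVAR v) ∉ occA ψ) :
      PrfAt Λ (AForm.imp (.at_ (s := s) z (AForm.and (.svar y) φ)) ψ) →
      PrfAt Λ (AForm.imp (.at_ (s := s) z φ) ψ)
  | paste1 {s} (σ : Sg.Op) (i : Fin (Sg.n σ)) (φs : ∀ j, AForm Sg L (Sg.arg σ j))
      (z : StSym L (Sg.res σ)) (y : L.SVAR (Sg.arg σ i)) (ψ : AForm Sg L s)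
      (hzy : (⟨Sg.res σ, z⟩ : Σ v, StSym L v) ≠ ⟨Sg.arg σ i, Sum.inr y⟩)
      (hyφ : (⟨Sg.arg σ i, y⟩ : Σ v, L.SVAR v) ∉ occA (φs i))
      (hyψ : (⟨Sg.arg σ i, y⟩ : Σ v, L.SVAR v) ∉ occA ψ) :
      PrfAt Λ (AForm.imp
        (.at_ (s := s) z (.app σ (Function.update φs i (AForm.and (.svar y) (φs i))))) ψ) →
      PrfAt Λ (AForm.imp (.at_ (s := s) z (.app σ φs)) ψ)

/-- Conjunction of a list of `H_Σ(@_z,∀)`-formulas. -/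
noncomputable def conjA {s} : List (AForm Sg L s) → AForm Sg L s
  | [] => AForm.top s
  | φ :: l => AForm.and φ (conjA l)

/-- Consistency with respect to `H_Σ(@_z,∀)` extended with the axioms `Λ`. -/
def ConsistentA (Λ : ∀ t, Set (AForm Sg L t)) {s} (Γ : Set (AForm Sg L s)) : Prop :=
  ¬ ∃ l : List (AForm Sg L s), (∀ φ ∈ l, φ ∈ Γ) ∧ PrfAt Λ (AForm.imp (conjA l) (AForm.bot s))

/-- Maximal consistent sets for `H_Σ(@_z,∀)` extended with `Λ`. -/
def MaxConsistentA (Λ : ∀ t, Set (AForm Sg L t)) {s} (Γ : Set (AForm Sg L s)) : Prop :=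
  ConsistentA Λ Γ ∧ ∀ Δ, ConsistentA Λ Δ → Γ ⊆ Δ → Δ = Γ

/-- The empty set of extra axioms: the plain system `H_Σ(@_z,∀)`. -/
def noAx : ∀ t, Set (AForm Sg L t) := fun _ => ∅

/-- A set of formulas is named if one of its elements is a nominal. -/
def NamedSet {s} (Γ : Set (AForm Sg L s)) : Prop := ∃ j : L.NOM s, AForm.nom j ∈ Γ

/-- `Γ` is 0-pasted. -/
def Pasted0 {s} (Γ : Set (AForm Sg L s)) : Prop :=
  ∀ {u} (z : StSym L u) (φ : AForm Sg L u), AForm.at_ (s := s) z φ ∈ Γ →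
    ∃ j : L.NOM u, AForm.at_ (s := s) z (AForm.and (.nom j) φ) ∈ Γ

/-- `Γ` is 1-pasted. -/
def Pasted1 {s} (Γ : Set (AForm Sg L s)) : Prop :=
  ∀ (σ : Sg.Op) (i : Fin (Sg.n σ)) (z : StSym L (Sg.res σ))
    (φs : ∀ j, AForm Sg L (Sg.arg σ j)), AForm.at_ (s := s) z (.app σ φs) ∈ Γ →
    ∃ j : L.NOM (Sg.arg σ i),
      AForm.at_ (s := s) z (.app σ (Function.update φs i (AForm.and (.nom j) (φs i)))) ∈ Γ

/-- `Γ` is pasted: both 0-pasted and 1-pasted. -/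
def PastedSet {s} (Γ : Set (AForm Sg L s)) : Prop := Pasted0 Γ ∧ Pasted1 Γ

/-- `Γ` is `@`-witnessed. -/
def AtWitnessed {s} (Γ : Set (AForm Sg L s)) : Prop :=
  (∀ {u t} (k : L.NOM u) (x : L.SVAR t) (φ : AForm Sg L u),
      AForm.at_ (s := s) (Sum.inl k) (exiA x φ) ∈ Γ →
      ∃ j : L.NOM t, AForm.at_ (s := s) (Sum.inl k) (substA x (.nom j) φ) ∈ Γ) ∧
  (∀ {t} (x : L.SVAR t), ∃ j : L.NOM t, AForm.at_ (s := s) (Sum.inl j) (AForm.svar x) ∈ Γ)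

/-- `Δ_z`: the set of formulas holding at the state named by `z`, relative to a
maximal consistent set `Γ` of sort `s`. -/
def DeltaS {s} (Γ : Set (AForm Sg L s)) {u} (z : StSym L u) : Set (AForm Sg L u) :=
  {φ | AForm.at_ (s := s) z φ ∈ Γ}

/-- The canonical relation for `H_Σ(@_z,∀)`. -/
def CanRA (σ : Sg.Op) (w : Set (AForm Sg L (Sg.res σ)))
    (us : ∀ i, Set (AForm Sg L (Sg.arg σ i))) : Prop :=
  ∀ ψs : ∀ i, AForm Sg L (Sg.arg σ i), (∀ i, ψs i ∈ us i) → AForm.app σ ψs ∈ w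

section NamedModel

variable (Γf : ∀ t, Set (AForm Sg L t))

/-- `Δ_z` relative to an `S`-sorted family of maximal consistent sets. -/
def DeltaF {u} (z : StSym L u) : Set (AForm Sg L u) :=
  {φ | AForm.at_ (s := u) z φ ∈ Γf u}

/-- Worlds of sort `t` of the named model generated by `Γf`: the sets `Δ_z`. -/
def NW (t : Sg.S) : Type := {Δ : Set (AForm Sg L t) // ∃ z : StSym L t, Δ = DeltaF Γf z}

/-- The named model generated by a named, pasted and `@`-witnessed family. -/
noncomputable def namedModel : Model Sg L where
  W := NW Γf
  ne := fun t => ⟨⟨DeltaF Γf (Sum.inr (Classical.choice (L.neS t))), ⟨_, rfl⟩⟩⟩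
  R := fun σ w ws => CanRA σ w.val (fun i => (ws i).val)
  Vp := fun _ p => {w | AForm.prop p ∈ w.val}
  Vn := fun _ j => {w | AForm.nom j ∈ w.val}

/-- The natural assignment of the named model: each state variable denotes the
world containing it. -/
noncomputable def naturalAssign : Assign (namedModel Γf) := fun t x =>
  if h : ∃ w : NW Γf t, AForm.svar x ∈ w.val then h.choose
  else Classical.choice ((namedModel Γf).ne t)

end NamedModel

/-- The inclusion of `H_Σ(@_z,∀)`-formulas into the language extended with new nominals. -/
def AForm.mapNom : ∀ {s}, AForm Sg L s → AForm Sg L.addNom s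
  | _, .prop p => .prop p
  | _, .nom j => .nom (Sum.inl j)
  | _, .svar x => .svar x
  | _, .neg φ => .neg φ.mapNom
  | _, .or φ ψ => .or φ.mapNom ψ.mapNom
  | _, .app σ φs => .app σ (fun i => (φs i).mapNom)
  | _, .all x φ => .all x φ.mapNom
  | _, .at_ z φ => .at_ (Sum.map Sum.inl id z) φ.mapNom
/-! ### Matching logic -/

/-- Matching logic patterns over a signature (with state/element variables `SV`),
built from variables, `¬`, `∨`, the symbols of the signature, and `∃`.
These coincide with the hybrid formulas `Form⁰` containing no nominals and no
propositional variables. -/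
inductive Pat (Sg : Sig) (SV : Sg.S → Type) : Sg.S → Type where
  | svar {s} : SV s → Pat Sg SV s
  | neg {s} : Pat Sg SV s → Pat Sg SV s
  | or {s} : Pat Sg SV s → Pat Sg SV s → Pat Sg SV s
  | app (σ : Sg.Op) : (∀ i, Pat Sg SV (Sg.arg σ i)) → Pat Sg SV (Sg.res σ)
  | ex {s t} : SV t → Pat Sg SV s → Pat Sg SV s

namespace Pat

variable {SV : Sg.S → Type}

def imp {s} (φ ψ : Pat Sg SV s) : Pat Sg SV s := .or (.neg φ) ψ

def and {s} (φ ψ : Pat Sg SV s) : Pat Sg SV s := .neg (.or (.neg φ) (.neg ψ))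

def iff {s} (φ ψ : Pat Sg SV s) : Pat Sg SV s := and (imp φ ψ) (imp ψ φ)

end Pat

/-- A matching logic model: nonempty carriers and powerset-valued interpretations. -/
structure MLModel (Sg : Sig) : Type 1 where
  M : Sg.S → Type
  ne : ∀ s, Nonempty (M s)
  interp : ∀ σ : Sg.Op, (∀ i, M (Sg.arg σ i)) → Set (M (Sg.res σ))

/-- An `M`-valuation of the element variables. -/
def Valu {Sg : Sig} (SV : Sg.S → Type) (K : MLModel Sg) := ∀ s, SV s → K.M s

/-- Valuations agreeing except possibly at `x`. -/
def VariantV {SV : Sg.S → Type} {K : MLModel Sg} (ρ ρ' : Valu SV K) {t} (x : SV t) : Prop :=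
  ∀ (u) (y : SV u), (⟨u, y⟩ : Σ v, SV v) ≠ ⟨t, x⟩ → ρ u y = ρ' u y

/-- The extension `ρ̄` of a valuation to all patterns (the pointwise extension is
used for the symbols, and `ρ̄(∃x.φ) = ⋃_a ρ̄[a/x](φ)`). -/
def extV {SV : Sg.S → Type} (K : MLModel Sg) : ∀ {s}, Valu SV K → Pat Sg SV s → Set (K.M s)
  | s, ρ, .svar x => {ρ s x}
  | _, ρ, .neg φ => (extV K ρ φ)ᶜ
  | _, ρ, .or φ ψ => extV K ρ φ ∪ extV K ρ ψ
  | _, ρ, .app σ φs => {m | ∃ as, (∀ i, as i ∈ extV K ρ (φs i)) ∧ m ∈ K.interp σ as}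
  | _, ρ, .ex x φ => {m | ∃ ρ', VariantV ρ ρ' x ∧ m ∈ extV K ρ' φ}

/-- `(M,ρ) ⊨^{ML}_s φ` : the pattern `φ` is matched by every element. -/
def MLSat {SV : Sg.S → Type} (K : MLModel Sg) (ρ : Valu SV K) {s} (φ : Pat Sg SV s) : Prop :=
  extV K ρ φ = Set.univ

/-- A hybrid-logic `(S,Σ)`-frame (no valuation needed for `Form⁰`-formulas). -/
structure Frame (Sg : Sig) : Type 1 where
  W : Sg.S → Type
  ne : ∀ s, Nonempty (W s)
  R : ∀ σ : Sg.Op, W (Sg.res σ) → (∀ i, W (Sg.arg σ i)) → Prop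

/-- An assignment into a frame. -/
def FAssign {Sg : Sig} (SV : Sg.S → Type) (F : Frame Sg) := ∀ s, SV s → F.W s

/-- Frame assignments agreeing except possibly at `x`. -/
def FVariant {SV : Sg.S → Type} {F : Frame Sg} (g g' : FAssign SV F) {t} (x : SV t) : Prop :=
  ∀ (u) (y : SV u), (⟨u, y⟩ : Σ v, SV v) ≠ ⟨t, x⟩ → g u y = g' u y

/-- Hybrid (modal) satisfaction of `Form⁰`-formulas in a frame with an assignment. -/
def SatP {SV : Sg.S → Type} (F : Frame Sg) : ∀ {s}, FAssign SV F → Pat Sg SV s → F.W s → Prop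
  | s, g, .svar x, w => w = g s x
  | _, g, .neg φ, w => ¬ SatP F g φ w
  | _, g, .or φ ψ, w => SatP F g φ w ∨ SatP F g ψ w
  | _, g, .app σ φs, w => ∃ ws, F.R σ w ws ∧ ∀ i, SatP F g (φs i) (ws i)
  | _, g, .ex x φ, w => ∃ g', FVariant g g' x ∧ SatP F g' φ w

/-- The hybrid frame associated to a matching logic model. -/
def frameOf (K : MLModel Sg) : Frame Sg where
  W := K.M
  ne := K.ne
  R := fun σ w ws => w ∈ K.interp σ ws

/-- The matching logic model associated to a hybrid frame. -/
def mlOf (F : Frame Sg) : MLModel Sg where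
  M := F.W
  ne := F.ne
  interp := fun σ ws => {w | F.R σ w ws}

/-- `Form⁰`-formulas (patterns) as formulas of the hybrid logic `H_Σ(∀)`,
with `∃xφ := ¬∀x¬φ`. -/
def Pat.toForm : ∀ {s}, Pat Sg L.SVAR s → Form Sg L s
  | _, .svar x => .svar x
  | _, .neg φ => .neg φ.toForm
  | _, .or φ ψ => .or φ.toForm ψ.toForm
  | _, .app σ φs => .app σ (fun i => (φs i).toForm)
  | _, .ex x φ => exi x φ.toForm

/-! #### The signature `Σ'` with constants for propositional variables and nominals,
and definedness symbols -/

/-- Extra symbols of `Σ'`: a constant `c_p` for each propositional variable `p`, a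
constant `c_i` for each nominal `i`, and a definedness symbol `⌈_⌉^{s₂}_{s₁}` for
every pair of sorts. -/
inductive ExtraOp (Sg : Sig) (L : Lang Sg) : Type where
  | cP : (Σ t, L.PROP t) → ExtraOp Sg L
  | cN : (Σ t, L.NOM t) → ExtraOp Sg L
  | defin : Sg.S → Sg.S → ExtraOp Sg L

/-- The extended signature `Σ' = Σ ∪ Σ_PROP ∪ Σ_NOM` (together with definedness symbols). -/
def SigC (Sg : Sig) (L : Lang Sg) : Sig where
  S := Sg.S
  Op := Sg.Op ⊕ ExtraOp Sg L
  n := fun σ => match σ with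
    | .inl σ => Sg.n σ
    | .inr (.cP _) => 0
    | .inr (.cN _) => 0
    | .inr (.defin _ _) => 1
  arg := fun σ => match σ with
    | .inl σ => Sg.arg σ
    | .inr (.cP _) => Fin.elim0
    | .inr (.cN _) => Fin.elim0
    | .inr (.defin s1 _) => fun _ => s1
  res := fun σ => match σ with
    | .inl σ => Sg.res σ
    | .inr (.cP c) => c.1
    | .inr (.cN c) => c.1
    | .inr (.defin _ s2) => s2

/-- The definedness pattern `⌈φ⌉^{s₂}_{s₁}`. -/
def defP {s1 : Sg.S} (s2 : Sg.S) (φ : Pat (SigC Sg L) L.SVAR s1) : Pat (SigC Sg L) L.SVAR s2 :=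
  .app (Sg := SigC Sg L) (Sum.inr (ExtraOp.defin s1 s2)) (fun _ => φ)

/-- The equality pattern `φ =^{s₂}_{s₁} φ' := ⌊φ ↔ φ'⌋^{s₂}_{s₁}`. -/
def eqP {s1 : Sg.S} (s2 : Sg.S) (φ ψ : Pat (SigC Sg L) L.SVAR s1) : Pat (SigC Sg L) L.SVAR s2 :=
  .neg (defP s2 (.neg (Pat.iff φ ψ)))

/-- The constant pattern `c_i` for a nominal `i`. -/
def cNom {t : Sg.S} (i : L.NOM t) : Pat (SigC Sg L) L.SVAR t :=
  .app (Sg := SigC Sg L) (Sum.inr (ExtraOp.cN ⟨t, i⟩)) (fun h => Fin.elim0 h)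

/-- The constant pattern `c_p` for a propositional variable `p`. -/
def cProp {t : Sg.S} (p : L.PROP t) : Pat (SigC Sg L) L.SVAR t :=
  .app (Sg := SigC Sg L) (Sum.inr (ExtraOp.cP ⟨t, p⟩)) (fun h => Fin.elim0 h)

/-- A state symbol as a pattern over `Σ'`. -/
def symPat {t : Sg.S} : StSym L t → Pat (SigC Sg L) L.SVAR t
  | .inl j => cNom j
  | .inr x => .svar x

/-- The translation `φ ↦ φ'` of `H_Σ(@_z,∀)`-formulas into matching logic patterns
over `Σ'`: propositional variables and nominals become constants, `∀x := ¬∃x¬`, and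
`@_z^s φ := ⌈z ∧ φ⌉^s`. -/
def AForm.toPat : ∀ {s}, AForm Sg L s → Pat (SigC Sg L) L.SVAR s
  | _, .prop p => cProp p
  | _, .nom j => cNom j
  | _, .svar x => .svar x
  | _, .neg φ => .neg φ.toPat
  | _, .or φ ψ => .or φ.toPat ψ.toPat
  | _, .app σ φs => .app (Sg := SigC Sg L) (Sum.inl σ) (fun i => (φs i).toPat)
  | _, .all x φ => .neg (.ex x (.neg φ.toPat))
  | s, .at_ (t := t) z φ => defP s (Pat.and (symPat z) φ.toPat)

/-- A matching logic model over `Σ'` interprets definedness correctly if each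
definedness symbol applied to any element yields the whole carrier. -/
def DefOK (K : MLModel (SigC Sg L)) : Prop :=
  ∀ (s1 s2 : Sg.S) (as : ∀ i : Fin 1, K.M s1), K.interp (Sum.inr (ExtraOp.defin s1 s2)) as = Set.univ

/-- The theory `Γ' = {∃x (x = c_i) : i ∈ NOM}` (at every context sort), forcing the
nominal constants to be functional (singleton) patterns. -/
def GammaC (Sg : Sig) (L : Lang Sg) : ∀ s2 : Sg.S, Set (Pat (SigC Sg L) L.SVAR s2) :=
  fun s2 => {χ | ∃ (t : Sg.S) (i : L.NOM t) (x : L.SVAR t),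
    χ = Pat.ex (Sg := SigC Sg L) x (eqP s2 (.svar x) (cNom i))}

/-- A matching logic model satisfies the theory `Γ'`. -/
def SatGammaC (K : MLModel (SigC Sg L)) : Prop :=
  ∀ (s2 : Sg.S), ∀ χ ∈ GammaC Sg L s2, ∀ ρ : Valu (Sg := SigC Sg L) L.SVAR K, extV K ρ χ = Set.univ

/-- The ML model obtained from a hybrid model by forgetting the valuations. -/
def toML {Sg : Sig} {L : Lang Sg} (M : Model Sg L) : MLModel Sg :=
  ⟨M.W, M.ne, fun σ ws => {w | M.R σ w ws}⟩

lemma sat_toForm_iff_extV {Sg : Sig} {L : Lang Sg} (M : Model Sg L) :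
    ∀ {s} (φ : Pat Sg L.SVAR s) (g : Assign M) (w : M.W s),
      Sat M g φ.toForm w ↔ w ∈ extV (toML M) g φ := by
  intro s φ
  induction φ with
  | svar x =>
      intro g w
      simp [Pat.toForm, Sat, extV, toML]
      exact Iff.rfl
  | neg φ ih =>
      intro g w
      simp [Pat.toForm, Sat, extV, ih]
      exact Iff.rfl
  | or φ ψ ih1 ih2 =>
      intro g w
      simp [Pat.toForm, Sat, extV, ih1, ih2]
      exact Iff.rfl
  | app σ φs ih =>
      intro g w
      simp only [Pat.toForm, Sat, extV, toML, Set.mem_setOf_eq]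
      constructor
      · rintro ⟨ws, hR, hsat⟩
        exact ⟨ws, fun i => (ih i g (ws i)).1 (hsat i), hR⟩
      · rintro ⟨ws, hsat, hR⟩
        exact ⟨ws, hR, fun i => (ih i g (ws i)).2 (hsat i)⟩
  | ex x φ ih =>
      intro g w
      simp only [Pat.toForm, exi, Sat, extV, Set.mem_setOf_eq]
      constructor
      · intro h
        by_contra hc
        change ¬ ∃ ρ', VariantV (K := toML M) g ρ' x ∧ _ at hc
        exact h fun g' hv hs => hc ⟨g', hv, (ih g' w).1 hs⟩
      · rintro ⟨g', hv, hm⟩ h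
        exact h g' hv ((ih g' w).2 hm)

/-! ## STATEMENT 18: equivalence of validity for patterns -/
theorem ml_hybrid_validity {Sg : Sig} {L : Lang Sg} {s : Sg.S} (φ : Pat Sg L.SVAR s) :
    (∀ (K : MLModel Sg) (ρ : Valu L.SVAR K), MLSat K ρ φ) ↔
    (∀ (M : Model Sg L), M.Standard →
      ∀ (g : Assign M) (w : M.W s), Sat M g φ.toForm w) := by
  constructor
  · intro hml M _hstd g w
    have h := hml (toML M) g
    have : w ∈ extV (toML M) g φ := by unfold MLSat at h; simp [h]; exact trivial
    exact (sat_toForm_iff_extV M φ g w).2 this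
  · intro hhyb K ρ
    let M : Model Sg L :=
      ⟨K.M, K.ne, fun σ w ws => w ∈ K.interp σ ws, fun _ _ => Set.univ,
        fun t _ => {Classical.choice (K.ne t)}⟩
    have hstd : M.Standard := fun t j => ⟨Classical.choice (K.ne t), rfl⟩
    apply Set.eq_univ_of_forall
    intro w
    exact (sat_toForm_iff_extV M φ ρ w).1 (hhyb M hstd ρ w)

end HybridML
end

section
/- Representation of hybrid formulas in Matching Logic (semantic form of Theorem ml2): Let (S,Σ) be a many-sorted signature and φ a formula of sort s of H_Σ(@_z,∀) over (S,Σ). Let Σ' = Σ ∪ {c_p : p ∈ PROP} ∪ {c_i : i ∈ NOM} (each c_p, c_i a constant symbol of the appropriate sort), let Γ' = {∃x (x = c_i) : i ∈ NOM}, and let φ' be obtained from φ by replacing every propositional variable p by c_p and every nominal i by c_i. Then φ is valid in H_Σ(@_z,∀) over (S,Σ) (i.e., M,g,w ⊨_s φ for every standard model M, assignment g, and world w of sort s) if and only if φ' holds in every matching logic model over (S,Σ') that satisfies Γ' (i.e., for every such M' and every M'-valuation ρ, ρ̄(φ') = M'_s). Consequently, by completeness, ⊢_s^{HModL_(S,Σ)}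 φ iff Γ' ⊢_{ML_(S,Σ')} φ'. -/
set_option maxHeartbeats 1000000

attribute [local instance] Classical.propDecidable

namespace HybridML

variable {Sg : Sig} {L : Lang Sg}

/-! ### Auxiliary development for Statement 19 -/

section Proof19

variable {Sg : Sig} {L : Lang Sg}

private lemma fin0_funext {C : Fin 0 → Sort _} (f g : ∀ i, C i) : f = g :=
  funext fun i => i.elim0

/-- The ML model associated to a hybrid model. -/
noncomputable def mlModelOf (M : Model Sg L) : MLModel (SigC Sg L) where
  M := M.W
  ne := M.ne
  interp := fun σ => match σ with
    | Sum.inl σ => fun ws => {w | M.R σ w ws}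
    | Sum.inr (.cP c) => fun _ => M.Vp c.1 c.2
    | Sum.inr (.cN c) => fun _ => M.Vn c.1 c.2
    | Sum.inr (.defin _ _) => fun _ => Set.univ

/-- The hybrid model associated to an ML model over `Σ'`. -/
noncomputable def modelOf (K : MLModel (SigC Sg L)) : Model Sg L where
  W := K.M
  ne := K.ne
  R := fun σ w ws => w ∈ K.interp (Sum.inl σ) ws
  Vp := fun t p => K.interp (Sum.inr (.cP ⟨t, p⟩)) (fun i => i.elim0)
  Vn := fun t j => K.interp (Sum.inr (.cN ⟨t, j⟩)) (fun i => i.elim0)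

lemma mem_extV_cN (K : MLModel (SigC Sg L)) (ρ : Valu (Sg := SigC Sg L) L.SVAR K) {t} (j : L.NOM t)
    (w : K.M t) :
    w ∈ extV K ρ (cNom j) ↔ w ∈ K.interp (Sum.inr (.cN ⟨t, j⟩)) (fun i => i.elim0) := by
  constructor
  · rintro ⟨as, -, hw⟩
    rwa [fin0_funext as (fun i => i.elim0)] at hw
  · intro hw
    exact ⟨fun i => i.elim0, fun i => i.elim0, hw⟩

lemma mem_extV_cP (K : MLModel (SigC Sg L)) (ρ : Valu (Sg := SigC Sg L) L.SVAR K) {t} (p : L.PROP t)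
    (w : K.M t) :
    w ∈ extV K ρ (cProp p) ↔ w ∈ K.interp (Sum.inr (.cP ⟨t, p⟩)) (fun i => i.elim0) := by
  constructor
  · rintro ⟨as, -, hw⟩
    rwa [fin0_funext as (fun i => i.elim0)] at hw
  · intro hw
    exact ⟨fun i => i.elim0, fun i => i.elim0, hw⟩

lemma extV_and (K : MLModel (SigC Sg L)) (ρ : Valu (Sg := SigC Sg L) L.SVAR K) {t}
    (α β : Pat (SigC Sg L) L.SVAR t) :
    extV K ρ (Pat.and α β) = extV K ρ α ∩ extV K ρ β := by
  ext w
  show w ∈ ((extV K ρ α)ᶜ ∪ (extV K ρ β)ᶜ)ᶜ ↔ _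
  simp [not_or]

lemma mem_extV_defP (K : MLModel (SigC Sg L)) (hdef : DefOK K) {s1 : Sg.S} (s2 : Sg.S)
    (ρ : Valu (Sg := SigC Sg L) L.SVAR K) (ψ : Pat (SigC Sg L) L.SVAR s1) (w : K.M s2) :
    w ∈ extV K ρ (defP s2 ψ) ↔ ∃ a, a ∈ extV K ρ ψ := by
  constructor
  · rintro ⟨as, has, -⟩
    exact ⟨as ⟨0, Nat.zero_lt_one⟩, has ⟨0, Nat.zero_lt_one⟩⟩
  · rintro ⟨a, ha⟩
    refine ⟨fun _ => a, fun _ => ha, ?_⟩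
    exact (Set.eq_univ_iff_forall.mp (hdef s1 s2 _)) w

lemma extV_iff_univ (K : MLModel (SigC Sg L)) (ρ : Valu (Sg := SigC Sg L) L.SVAR K) {t}
    (α β : Pat (SigC Sg L) L.SVAR t) :
    extV K ρ (Pat.iff α β) = Set.univ ↔ extV K ρ α = extV K ρ β := by
  have h : extV K ρ (Pat.iff α β)
      = (((extV K ρ α)ᶜ ∪ extV K ρ β) ∩ ((extV K ρ β)ᶜ ∪ extV K ρ α)) := by
    rw [show Pat.iff α β = Pat.and (Pat.imp α β) (Pat.imp β α) from rfl, extV_and]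
    rfl
  rw [h]
  constructor
  · intro hu
    ext a
    have := Set.ext_iff.mp hu a
    simp only [Set.mem_inter_iff, Set.mem_union, Set.mem_compl_iff, Set.mem_univ,
      iff_true] at this
    constructor
    · intro ha; rcases this.1 with h' | h' <;> tauto
    · intro ha; rcases this.2 with h' | h' <;> tauto
  · intro hab
    rw [hab]
    ext a
    simp [em]

lemma mem_extV_eqP (K : MLModel (SigC Sg L)) (hdef : DefOK K) {s1 : Sg.S} (s2 : Sg.S)
    (ρ : Valu (Sg := SigC Sg L) L.SVAR K) (α β : Pat (SigC Sg L) L.SVAR s1) (w : K.M s2) :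
    w ∈ extV K ρ (eqP s2 α β) ↔ extV K ρ α = extV K ρ β := by
  show w ∈ (extV K ρ (defP s2 (.neg (Pat.iff α β))))ᶜ ↔ _
  rw [Set.mem_compl_iff, mem_extV_defP K hdef]
  push_neg
  rw [← extV_iff_univ K ρ α β]
  constructor
  · intro h
    ext a
    simpa using not_not.mp (h a)
  · intro h a
    rw [show extV K ρ (Pat.neg (Pat.iff α β)) = (extV K ρ (Pat.iff α β))ᶜ from rfl, h]
    simp

lemma extV_symPat (K : MLModel (SigC Sg L)) (hstd : (modelOf K).Standard)
    (ρ : Valu (Sg := SigC Sg L) L.SVAR K) {t} (z : StSym L t) :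
    extV K ρ (symPat z) = {den (modelOf K) ρ z} := by
  cases z with
  | inl j =>
    have hv : ∃ v, (modelOf K).Vn t j = {v} := hstd t j
    have hden : den (modelOf K) ρ (Sum.inl j) = hv.choose := by
      show (if h : ∃ v, (modelOf K).Vn t j = {v} then h.choose
        else Classical.choice ((modelOf K).ne t)) = hv.choose
      rw [dif_pos hv]
    have hVn : (modelOf K).Vn t j = {hv.choose} := hv.choose_spec
    ext w
    rw [show symPat (L := L) (Sum.inl j) = cNom j from rfl, mem_extV_cN, hden]
    exact Set.ext_iff.mp hVn w
  | inr x => rfl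

lemma key_corr (K : MLModel (SigC Sg L)) (hdef : DefOK K)
    (hstd : (modelOf K).Standard) :
    ∀ {s} (φ : AForm Sg L s) (ρ : Valu (Sg := SigC Sg L) L.SVAR K) (w : K.M s),
      w ∈ extV K ρ φ.toPat ↔ SatA (modelOf K) ρ φ w := by
  intro s φ
  induction φ with
  | prop p =>
    intro ρ w
    rw [show (AForm.prop (L := L) p).toPat = cProp p from rfl, mem_extV_cP]
    exact Iff.rfl
  | nom j =>
    intro ρ w
    rw [show (AForm.nom (L := L) j).toPat = cNom j from rfl, mem_extV_cN]
    exact Iff.rfl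
  | svar x => intro ρ w; exact Iff.rfl
  | neg φ ih =>
    intro ρ w
    show w ∈ (extV K ρ φ.toPat)ᶜ ↔ ¬ SatA (modelOf K) ρ φ w
    rw [Set.mem_compl_iff]
    exact not_congr (ih ρ w)
  | or φ ψ ihφ ihψ =>
    intro ρ w
    show w ∈ extV K ρ φ.toPat ∪ extV K ρ ψ.toPat ↔ _
    rw [Set.mem_union]
    exact or_congr (ihφ ρ w) (ihψ ρ w)
  | app σ φs ih =>
    intro ρ w
    constructor
    · rintro ⟨as, has, hw⟩
      exact ⟨as, hw, fun i => (ih i ρ (as i)).mp (has i)⟩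
    · rintro ⟨ws, hR, hs⟩
      exact ⟨ws, fun i => (ih i ρ (ws i)).mpr (hs i), hR⟩
  | all x φ ih =>
    intro ρ w
    constructor
    · intro h ρ' hvar
      by_contra hc
      exact h ⟨ρ', hvar, fun hm => hc ((ih ρ' w).mp hm)⟩
    · rintro h ⟨ρ', hvar, hm⟩
      exact hm ((ih ρ' w).mpr (h ρ' hvar))
  | at_ z φ ih =>
    intro ρ w
    show w ∈ extV K ρ (defP _ (Pat.and (symPat z) φ.toPat)) ↔
      SatA (modelOf K) ρ φ (den (modelOf K) ρ z)
    rw [mem_extV_defP K hdef]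
    constructor
    · rintro ⟨a, ha⟩
      replace ha := (Set.ext_iff.mp (extV_and K ρ (symPat z) φ.toPat) a).mp ha
      obtain ⟨ha1, ha2⟩ := ha
      have ha1 : a = den (modelOf K) ρ z := (Set.ext_iff.mp (extV_symPat K hstd ρ z) a).mp ha1
      subst ha1
      exact (ih ρ _).mp ha2
    · intro h
      refine ⟨den (modelOf K) ρ z, ?_⟩
      exact (Set.ext_iff.mp (extV_and K ρ (symPat z) φ.toPat) _).mpr
        ⟨(Set.ext_iff.mp (extV_symPat K hstd ρ z) _).mpr rfl, (ih ρ _).mpr h⟩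

/-- Updating a valuation at a sorted variable. -/
noncomputable def vupd {K : MLModel (SigC Sg L)} (ρ : Valu (Sg := SigC Sg L) L.SVAR K) {t : Sg.S}
    (x : L.SVAR t) (v : K.M t) : Valu (Sg := SigC Sg L) L.SVAR K := fun u y =>
  if h : (⟨u, y⟩ : Σ v, L.SVAR v) = ⟨t, x⟩ then
    cast (congrArg K.M (congrArg Sigma.fst h)).symm v
  else ρ u y

lemma vupd_variant {K : MLModel (SigC Sg L)} (ρ : Valu (Sg := SigC Sg L) L.SVAR K) {t : Sg.S}
    (x : L.SVAR t) (v : K.M t) : VariantV ρ (vupd ρ x v) x := by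
  intro u y h
  exact (dif_neg (c := (⟨u, y⟩ : Σ v, L.SVAR v) = ⟨t, x⟩) h
    (t := fun h => cast (congrArg K.M (congrArg Sigma.fst h)).symm v) (e := fun _ => ρ u y)).symm

lemma vupd_same {K : MLModel (SigC Sg L)} (ρ : Valu (Sg := SigC Sg L) L.SVAR K) {t : Sg.S}
    (x : L.SVAR t) (v : K.M t) : vupd ρ x v t x = v := by
  exact (dif_pos rfl).trans (eq_of_heq (cast_heq _ _))

lemma standard_of (K : MLModel (SigC Sg L)) (hdef : DefOK K) (hΓ : SatGammaC K) :
    (modelOf K).Standard := by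
  intro t j
  obtain ⟨x⟩ := L.neS t
  have hχ : (Pat.ex (Sg := SigC Sg L) x (eqP t (.svar x) (cNom j))) ∈ GammaC Sg L t :=
    ⟨t, j, x, rfl⟩
  set ρ : Valu (Sg := SigC Sg L) L.SVAR K := fun u _ => Classical.choice (K.ne u) with hρ
  have h := hΓ t _ hχ ρ
  have hm : Classical.choice (K.ne t) ∈
      extV K ρ (Pat.ex (Sg := SigC Sg L) x (eqP t (.svar x) (cNom j))) := by
    rw [h]; trivial
  obtain ⟨ρ', -, hmem⟩ := hm
  rw [mem_extV_eqP K hdef] at hmem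
  refine ⟨ρ' t x, ?_⟩
  have hVn : (modelOf K).Vn t j = extV K ρ' (cNom j) := by
    ext v; exact (mem_extV_cN K ρ' j v).symm
  rw [hVn, ← hmem]
  rfl

lemma defOK_mlModelOf (M : Model Sg L) : DefOK (mlModelOf M) := fun _ _ _ => rfl

lemma modelOf_mlModelOf (M : Model Sg L) : modelOf (mlModelOf M) = M := rfl

lemma satGammaC_mlModelOf (M : Model Sg L) (hstd : M.Standard) :
    SatGammaC (mlModelOf M) := by
  intro s2 χ hχ ρ
  obtain ⟨t, i, x, rfl⟩ := hχ
  obtain ⟨v, hv⟩ := hstd t i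
  ext m
  simp only [Set.mem_univ, iff_true]
  refine ⟨vupd ρ x v, vupd_variant ρ x v, ?_⟩
  rw [mem_extV_eqP (mlModelOf M) (defOK_mlModelOf M)]
  have h1 : extV (mlModelOf M) (vupd ρ x v) (Pat.svar (Sg := SigC Sg L) x) = {v} := by
    show ({(vupd ρ x v) t x} : Set _) = {v}
    exact congrArg singleton (vupd_same ρ x v)
  have h2 : extV (mlModelOf M) (vupd ρ x v) (cNom i) = M.Vn t i := by
    ext u; exact mem_extV_cN (mlModelOf M) _ i u
  rw [h1, h2, hv]
  rfl

end Proof19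

/-! ## STATEMENT 19: representation of hybrid formulas in matching logic -/
theorem hybrid_valid_iff_ml_consequence {Sg : Sig} {L : Lang Sg} {s : Sg.S}
    (φ : AForm Sg L s) :
    (∀ (M : Model Sg L), M.Standard →
      ∀ (g : Assign M) (w : M.W s), SatA M g φ w) ↔
    (∀ K : MLModel (SigC Sg L), DefOK K → SatGammaC K →
      ∀ ρ : Valu (Sg := SigC Sg L) L.SVAR K, extV K ρ φ.toPat = Set.univ) := by
  constructor
  · intro hyb K hdef hΓ ρ
    have hstd : (modelOf K).Standard := standard_of K hdef hΓ
    ext w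
    simp only [Set.mem_univ, iff_true]
    exact (key_corr K hdef hstd φ ρ w).mpr (hyb (modelOf K) hstd ρ w)
  · intro hml M hstd g w
    have hdef := defOK_mlModelOf M
    have hΓ := satGammaC_mlModelOf M hstd
    have hstd' : (modelOf (mlModelOf M)).Standard := by
      rw [modelOf_mlModelOf]; exact hstd
    have h := hml (mlModelOf M) hdef hΓ g
    have hw : w ∈ extV (mlModelOf M) g φ.toPat := by rw [h]; trivial
    exact (key_corr (mlModelOf M) hdef hstd' φ g w).mp hw


end HybridML
end
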